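/- Let K be an H-operator-valued kernel on X which is partially positive semidefinite with respect to the partition {X_s}_{s∈S}. The following are equivalent: (1) K is of bounded shift type; (2) for every α ∈ Γ the shift operator Ψ(α), defined on finitely supported sections by Ψ(α)(δ_x h) = δ_{α·x} h, is bounded with respect to the seminorms induced by the semi-inner products ⟨f,g⟩_K := Σ_{x,y} ⟨K(y,x)f(x), g(y)⟩ on F⁰(X_{d(α)};H) and F⁰(X_{c(α)};H), i.e., there exists M_α ≥ 0 with ⟨Ψ(α)f, Ψ(α)f⟩_K ≤ M_α ⟨f,f⟩_K for all f ∈ F⁰(X_{d(α)};H). If, in addition, K is Γ-invariant, these are also equivalent to: (3) for every α ∈ Γ, the operator Φ(α) defined on D_{d(α)} := span{K^{d(α)}_x h : x ∈ X_{d(α)}, h ∈ H_x} by Φ(α)K^{d(α)}_x h = K^{c(α)}_{α·x} h is bounded with respect to the norms of the reproducing kernel Hilbert spaces ℛ_{K^{d(α)}} and ℛ_{K^{c(α)}}. -/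

import Mathlib

open scoped InnerProductSpace

noncomputable section

universe u uΓ uS v vO w

/-- A `*`-semigroupoid: partially defined multiplication (the product `mul α β`
is subject to the axioms only when `d α = c β`) together with an involution. -/
structure StarSgd (Γ : Type uΓ) (S : Type uS) where
  d : Γ → S
  c : Γ → S
  mul : Γ → Γ → Γ
  star : Γ → Γ
  d_mul : ∀ {α β : Γ}, d α = c β → d (mul α β) = d β
  c_mul : ∀ {α β : Γ}, d α = c β → c (mul α β) = c α
  mul_assoc : ∀ {α β γ : Γ}, d α = c β → d β = c γ →
    mul α (mul β γ) = mul (mul α β) γ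
  d_star : ∀ α, d (star α) = c α
  c_star : ∀ α, c (star α) = d α
  star_star : ∀ α, star (star α) = α
  star_mul : ∀ {α β : Γ}, d α = c β → star (mul α β) = mul (star β) (star α)

/-- A left action of a semigroupoid on a set `X`, with surjective anchor `a`;
`act α x` is subject to the axioms only when `d α = a x`. -/
structure SgdAction (Γ : Type uΓ) (S : Type uS) (X : Type v) (G : StarSgd Γ S) where
  a : X → S
  a_surj : Function.Surjective a
  act : Γ → X → X
  a_act : ∀ {α : Γ} {x : X}, G.d α = a x → a (act α x) = G.c α
  act_mul : ∀ {α β : Γ} {x : X}, G.d β = a x → G.d α = G.c β →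
    act (G.mul α β) x = act α (act β x)

variable {𝕜 : Type u} [RCLike 𝕜] {Γ : Type uΓ} {S : Type uS} {X : Type v}
  {O : Type vO} {E : O → Type w}
  [∀ o, NormedAddCommGroup (E o)] [∀ o, InnerProductSpace 𝕜 (E o)]
  [∀ o, CompleteSpace (E o)]

/-- Transport along an equality of indices: since the Hilbert bundle over `X`
is given as a pullback `x ↦ E (p x)`, equal indices give literally the same
Hilbert space, and the transport is a linear isometry. -/
def castE (𝕜 : Type u) [RCLike 𝕜] {O : Type vO} (E : O → Type w)
    [∀ o, NormedAddCommGroup (E o)] [∀ o, InnerProductSpace 𝕜 (E o)]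
    {o o' : O} (h : o = o') : E o ≃ₗᵢ[𝕜] E o' := by
  subst h; exact LinearIsometryEquiv.refl 𝕜 (E o)

variable {G : StarSgd Γ S} (A : SgdAction Γ S X G) (p : X → O)

/-- `K` is partially Hermitian with respect to the partition of `X` into the
fibres of the anchor map. -/
def PartHermitian (K : ∀ y x : X, E (p x) →L[𝕜] E (p y)) : Prop :=
  ∀ x y : X, A.a x = A.a y → ContinuousLinearMap.adjoint (K x y) = K y x

/-- `K` is partially positive semidefinite with respect to the partition of
`X` into the fibres of the anchor map. -/
def PartPSD (K : ∀ y x : X, E (p x) →L[𝕜] E (p y)) : Prop :=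
  PartHermitian A p K ∧
  ∀ (s : S) (n : ℕ) (x : Fin n → X), (∀ i, A.a (x i) = s) →
    ∀ h : ∀ i, E (p (x i)),
      0 ≤ RCLike.re (∑ i, ∑ j, ⟪K (x j) (x i) (h i), h j⟫_𝕜)

variable (hp : ∀ {α : Γ} {x : X}, G.d α = A.a x → p (A.act α x) = p x)

/-- `K` is `Γ`-invariant: `K(α·x, y) = K(x, α*·y)`, expressed using the
transport isometries coming from the constancy of the bundle on orbits. -/
def GammaInvariant (K : ∀ y x : X, E (p x) →L[𝕜] E (p y)) : Prop :=
  ∀ (α : Γ) (x y : X) (hx : G.d α = A.a x) (hy : G.c α = A.a y) (k : E (p y)),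
    castE 𝕜 E (hp hx) (K (A.act α x) y k) =
      K x (A.act (G.star α) y)
        ((castE 𝕜 E (hp ((G.d_star α).trans hy))).symm k)

/-- `K` is of bounded shift type: for every `α` there is `M_α ≥ 0` dominating
the shifted quadratic forms by the original ones (stated via finite families of
points in the fibre `X_{d(α)}`). -/
def BoundedShiftType (K : ∀ y x : X, E (p x) →L[𝕜] E (p y)) : Prop :=
  ∀ α : Γ, ∃ M : ℝ, 0 ≤ M ∧
    ∀ (n : ℕ) (z : Fin n → X) (hz : ∀ i, G.d α = A.a (z i))
      (g : ∀ i, E (p (z i))),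
      RCLike.re (∑ i, ∑ j, ⟪K (A.act α (z j)) (A.act α (z i))
          ((castE 𝕜 E (hp (hz i))).symm (g i)),
          (castE 𝕜 E (hp (hz j))).symm (g j)⟫_𝕜) ≤
        M * RCLike.re (∑ i, ∑ j, ⟪K (z j) (z i) (g i), g j⟫_𝕜)

universe w'

variable [DecidableEq X]

/-- `F⁰(X_s; H)`: finitely supported sections over the fibre `X_s`. -/
def F0 (E : O → Type w) [∀ o, NormedAddCommGroup (E o)]
    {G : StarSgd Γ S} (A : SgdAction Γ S X G) (p : X → O) (s : S) : Type (max v w) :=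
  DFinsupp (fun x : {x : X // A.a x = s} => E (p x.val))

instance (s : S) : AddCommGroup (F0 E A p s) := by
  unfold F0; infer_instance

instance (s : S) : Module 𝕜 (F0 E A p s) := by
  unfold F0; infer_instance

open scoped Classical in
/-- The semi-inner product `⟨f, g⟩_K = ∑_{x,y} ⟨K(y,x) f(x), g(y)⟩` on the
finitely supported sections over the fibre `X_s`. -/
def kform (K : ∀ y x : X, E (p x) →L[𝕜] E (p y)) (s : S)
    (f g : F0 E A p s) : 𝕜 :=
  f.sum fun x fx => g.sum fun y gy => ⟪K y.val x.val fx, gy⟫_𝕜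

/-- A reproducing kernel Hilbert space of sections over the fibre `X_s`. -/
structure RKHSOn (𝕜 : Type u) [RCLike 𝕜] {Γ : Type uΓ} {S : Type uS}
    {X : Type v} {O : Type vO} (E : O → Type w)
    [∀ o, NormedAddCommGroup (E o)] [∀ o, InnerProductSpace 𝕜 (E o)]
    [∀ o, CompleteSpace (E o)]
    {G : StarSgd Γ S} (A : SgdAction Γ S X G) (p : X → O)
    (K : ∀ y x : X, E (p x) →L[𝕜] E (p y)) (s : S) :
    Type (max u v w (w' + 1)) where
  carrier : Type w'
  [ng : NormedAddCommGroup carrier]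
  [ip : InnerProductSpace 𝕜 carrier]
  [cs : CompleteSpace carrier]
  emb : carrier →ₗ[𝕜] ∀ x : {x : X // A.a x = s}, E (p x.val)
  emb_inj : Function.Injective emb
  Kx : ∀ x : {x : X // A.a x = s}, E (p x.val) → carrier
  emb_Kx : ∀ (x : {x : X // A.a x = s}) (h : E (p x.val))
    (y : {x : X // A.a x = s}), emb (Kx x h) y = K y.val x.val h
  repro : ∀ (f : carrier) (x : {x : X // A.a x = s}) (h : E (p x.val)),
    ⟪emb f x, h⟫_𝕜 = ⟪f, Kx x h⟫_𝕜

attribute [instance] RKHSOn.ng RKHSOn.ip RKHSOn.cs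

/-- The subspaces `D_s := span{K^s_x h}` of the reproducing kernel Hilbert
spaces. -/
def Dspan (K : ∀ y x : X, E (p x) →L[𝕜] E (p y))
    (R : ∀ s : S, RKHSOn.{u, uΓ, uS, v, vO, w, w'} 𝕜 E A p K s) (s : S) :
    Submodule 𝕜 (R s).carrier :=
  Submodule.span 𝕜 (⋃ x : {x : X // A.a x = s}, Set.range ((R s).Kx x))

section Aux

variable (K : ∀ y x : X, E (p x) →L[𝕜] E (p y)) {s : S}

lemma kform_single_single (x y : {x : X // A.a x = s}) (h : E (p x.val)) (k : E (p y.val)) :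
    kform A p K s (DFinsupp.single x h) (DFinsupp.single y k) = ⟪K y.val x.val h, k⟫_𝕜 := by
  classical
  unfold kform
  rw [DFinsupp.sum_single_index (by simp [DFinsupp.sum_zero]),
    DFinsupp.sum_single_index (by simp)]

lemma kform_add_left (f f' g : F0 E A p s) :
    kform A p K s (f + f') g = kform A p K s f g + kform A p K s f' g := by
  classical
  unfold kform
  erw [DFinsupp.sum_add_index (fun x => by simp [DFinsupp.sum_zero]; exact DFinsupp.sum_zero)
    (fun x b b' => by simp [map_add, inner_add_left, DFinsupp.sum_add]; exact DFinsupp.sum_add)]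

lemma kform_add_right (f g g' : F0 E A p s) :
    kform A p K s f (g + g') = kform A p K s f g + kform A p K s f g' := by
  classical
  unfold kform
  erw [← DFinsupp.sum_add]
  congr 1
  funext x fx
  erw [DFinsupp.sum_add_index (fun y => by simp) (fun y b b' => by simp [inner_add_right])]

lemma kform_sum_left {ι : Type*} (t : Finset ι) (u : ι → F0 E A p s) (g : F0 E A p s) :
    kform A p K s (∑ i ∈ t, u i) g = ∑ i ∈ t, kform A p K s (u i) g :=
  map_sum (AddMonoidHom.mk' (fun f => kform A p K s f g)
    (fun a b => kform_add_left A p K a b g)) u t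

lemma kform_sum_right {ι : Type*} (t : Finset ι) (f : F0 E A p s) (v : ι → F0 E A p s) :
    kform A p K s f (∑ j ∈ t, v j) = ∑ j ∈ t, kform A p K s f (v j) :=
  map_sum (AddMonoidHom.mk' (fun g => kform A p K s f g)
    (fun a b => kform_add_right A p K f a b)) v t

lemma kform_sum_single {n : ℕ} (w : Fin n → {x : X // A.a x = s}) (k : ∀ i, E (p (w i).val)) :
    kform A p K s (∑ i, DFinsupp.single (w i) (k i)) (∑ j, DFinsupp.single (w j) (k j)) =
      ∑ i, ∑ j, ⟪K (w j).val (w i).val (k i), k j⟫_𝕜 := by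
  erw [kform_sum_left]
  refine Finset.sum_congr rfl fun i _ => ?_
  erw [kform_sum_right]
  exact Finset.sum_congr rfl fun j _ => kform_single_single A p K _ _ _ _

lemma F0_eq_sum_single (f : F0 E A p s) :
    ∃ (n : ℕ) (w : Fin n → {x : X // A.a x = s}) (k : ∀ i, E (p (w i).val)),
      f = ∑ i, DFinsupp.single (w i) (k i) := by
  classical
  let f' : Π₀ x : {x : X // A.a x = s}, E (p x.val) := f
  refine ⟨f'.support.card, fun i => (f'.support.equivFin.symm i : {x : X // A.a x = s}),
    fun i => f' _, ?_⟩
  show f' = _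
  conv_lhs => rw [← DFinsupp.sum_single (f := f')]
  rw [DFinsupp.sum, ← Finset.sum_coe_sort f'.support]
  exact (Fintype.sum_equiv f'.support.equivFin.symm
    (fun i => DFinsupp.single (f'.support.equivFin.symm i).val
      (f' (f'.support.equivFin.symm i).val))
    (fun j => (DFinsupp.single j.val (f' j.val) : Π₀ x : {x : X // A.a x = s}, E (p x.val)))
    (fun i => rfl)).symm

end Aux
section Aux2

variable (K : ∀ y x : X, E (p x) →L[𝕜] E (p y))
variable (R : ∀ s : S, RKHSOn.{u, uΓ, uS, v, vO, w, w'} 𝕜 E A p K s) {s : S}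

lemma Kx_inner (x y : {x : X // A.a x = s}) (h : E (p x.val)) (k : E (p y.val)) :
    ⟪(R s).Kx x h, (R s).Kx y k⟫_𝕜 = ⟪K y.val x.val h, k⟫_𝕜 := by
  rw [← (R s).repro ((R s).Kx x h) y k, (R s).emb_Kx]

lemma Kx_smul (c : 𝕜) (x : {x : X // A.a x = s}) (h : E (p x.val)) :
    (R s).Kx x (c • h) = c • (R s).Kx x h := by
  apply (R s).emb_inj
  funext y
  rw [map_smul, Pi.smul_apply, (R s).emb_Kx, (R s).emb_Kx, ContinuousLinearMap.map_smul]

lemma norm_sq_sum_Kx {n : ℕ} (w : Fin n → {x : X // A.a x = s}) (k : ∀ i, E (p (w i).val)) :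
    ‖∑ i, (R s).Kx (w i) (k i)‖ ^ 2 =
      RCLike.re (∑ i, ∑ j, ⟪K (w j).val (w i).val (k i), k j⟫_𝕜) := by
  rw [← inner_self_eq_norm_sq (𝕜 := 𝕜), sum_inner]
  congr 1
  refine Finset.sum_congr rfl fun i _ => ?_
  rw [inner_sum]
  exact Finset.sum_congr rfl fun j _ => Kx_inner A p K R _ _ _ _

/-- The canonical generators of `Dspan`, as elements of the subtype. -/
def KxD (x : {x : X // A.a x = s}) (h : E (p x.val)) : ↥(Dspan A p K R s) :=
  ⟨(R s).Kx x h, Submodule.subset_span (Set.mem_iUnion.mpr ⟨x, Set.mem_range_self h⟩)⟩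

lemma Dspan_rep (f : ↥(Dspan A p K R s)) :
    ∃ (n : ℕ) (w : Fin n → {x : X // A.a x = s}) (k : ∀ i, E (p (w i).val)),
      f = ∑ i, KxD A p K R (w i) (k i) := by
  obtain ⟨n, c, v, hv⟩ := Submodule.mem_span_set'.mp f.2
  have hmem : ∀ i, ∃ (x : {x : X // A.a x = s}) (h : E (p x.val)),
      (v i : (R s).carrier) = (R s).Kx x h := by
    intro i
    obtain ⟨x, hx⟩ := Set.mem_iUnion.mp (v i).2
    obtain ⟨h, hh⟩ := hx
    exact ⟨x, h, hh.symm⟩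
  choose w k hk using hmem
  refine ⟨n, w, fun i => c i • k i, ?_⟩
  apply Subtype.ext
  rw [Submodule.coe_sum, ← hv]
  refine Finset.sum_congr rfl fun i _ => ?_
  rw [hk]
  exact (Kx_smul A p K R (c i) (w i) (k i)).symm

end Aux2
/-- for a partially positive semidefinite kernel `K`, being of
bounded shift type is equivalent to the boundedness of all the shift operators
`Ψ(α)` with respect to the seminorms induced by `⟨·,·⟩_K`; if moreover `K` is
`Γ`-invariant, both are equivalent to the boundedness of the operators `Φ(α)`
(determined by `Φ(α) K^{d(α)}_x h = K^{c(α)}_{α·x} h`) with respect to the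
norms of the reproducing kernel Hilbert spaces. -/
theorem bounded_shift_type_characterisation
    (K : ∀ y x : X, E (p x) →L[𝕜] E (p y)) (hK : PartPSD A p K)
    (Ψ : ∀ α : Γ, F0 E A p (G.d α) →ₗ[𝕜] F0 E A p (G.c α))
    (hΨ : ∀ (α : Γ) (x : X) (hx : G.d α = A.a x) (h : E (p x)),
      Ψ α (DFinsupp.single (⟨x, hx.symm⟩ : {x : X // A.a x = G.d α}) h) =
        DFinsupp.single (⟨A.act α x, A.a_act hx⟩ : {y : X // A.a y = G.c α})
          ((castE 𝕜 E (hp hx)).symm h)) :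
    (BoundedShiftType A p hp K ↔
      ∀ α : Γ, ∃ M : ℝ, 0 ≤ M ∧ ∀ f : F0 E A p (G.d α),
        RCLike.re (kform A p K (G.c α) (Ψ α f) (Ψ α f)) ≤
          M * RCLike.re (kform A p K (G.d α) f f)) ∧
    (GammaInvariant A p hp K →
      ∀ (R : ∀ s : S, RKHSOn.{u, uΓ, uS, v, vO, w, w'} 𝕜 E A p K s)
        (Φ : ∀ α : Γ,
          ↥(Dspan A p K R (G.d α)) →ₗ[𝕜] ↥(Dspan A p K R (G.c α))),
        (∀ (α : Γ) (x : X) (hx : G.d α = A.a x) (h : E (p x)),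
          Φ α ⟨(R (G.d α)).Kx ⟨x, hx.symm⟩ h,
              Submodule.subset_span
                (Set.mem_iUnion.mpr ⟨⟨x, hx.symm⟩, Set.mem_range_self h⟩)⟩ =
            ⟨(R (G.c α)).Kx ⟨A.act α x, A.a_act hx⟩
                ((castE 𝕜 E (hp hx)).symm h),
              Submodule.subset_span
                (Set.mem_iUnion.mpr ⟨⟨A.act α x, A.a_act hx⟩,
                  Set.mem_range_self _⟩)⟩) →
        (BoundedShiftType A p hp K ↔
          ∀ α : Γ, ∃ C : ℝ, 0 ≤ C ∧ ∀ f : ↥(Dspan A p K R (G.d α)),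
            ‖((Φ α f) : (R (G.c α)).carrier)‖ ≤
              C * ‖(f : (R (G.d α)).carrier)‖)) := by
  constructor
  · -- Part 1: BST ↔ boundedness of Ψ
    constructor
    · rintro hBST α
      obtain ⟨M, hM, hbd⟩ := hBST α
      refine ⟨M, hM, fun f => ?_⟩
      obtain ⟨n, ww, k, rfl⟩ := F0_eq_sum_single A p f
      have hΨf : Ψ α (∑ i, DFinsupp.single (ww i) (k i)) =
          ∑ i, DFinsupp.single (⟨A.act α (ww i).val, A.a_act (ww i).prop.symm⟩ :
            {y : X // A.a y = G.c α}) ((castE 𝕜 E (hp (ww i).prop.symm)).symm (k i)) := by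
        erw [map_sum]
        exact Finset.sum_congr rfl fun i _ => hΨ α (ww i).val (ww i).prop.symm (k i)
      erw [hΨf, kform_sum_single, kform_sum_single]
      exact hbd n (fun i => (ww i).val) (fun i => (ww i).prop.symm) k
    · rintro hbd α
      obtain ⟨M, hM, hb⟩ := hbd α
      refine ⟨M, hM, fun n z hz g => ?_⟩
      have key := hb (∑ i, DFinsupp.single (⟨z i, (hz i).symm⟩ :
        {x : X // A.a x = G.d α}) (g i))
      have hΨf : Ψ α (∑ i, DFinsupp.single (⟨z i, (hz i).symm⟩ :
          {x : X // A.a x = G.d α}) (g i)) =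
          ∑ i, DFinsupp.single (⟨A.act α (z i), A.a_act (hz i)⟩ :
            {y : X // A.a y = G.c α}) ((castE 𝕜 E (hp (hz i))).symm (g i)) := by
        erw [map_sum]
        exact Finset.sum_congr rfl fun i _ => hΨ α (z i) (hz i) (g i)
      erw [hΨf, kform_sum_single, kform_sum_single] at key
      exact key
  · -- Part 2: BST ↔ boundedness of Φ (under Γ-invariance)
    intro _hGI R Φ hΦ
    constructor
    · intro hBST α
      obtain ⟨M, hM, hbd⟩ := hBST α
      refine ⟨Real.sqrt M, Real.sqrt_nonneg M, fun f => ?_⟩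
      obtain ⟨n, ww, k, hrep⟩ := Dspan_rep A p K R f
      have hco : (f : (R (G.d α)).carrier) = ∑ i, (R (G.d α)).Kx (ww i) (k i) := by
        rw [hrep, Submodule.coe_sum]; rfl
      have hΦf : Φ α f = ∑ i, KxD A p K R
          (⟨A.act α (ww i).val, A.a_act (ww i).prop.symm⟩ : {y : X // A.a y = G.c α})
          ((castE 𝕜 E (hp (ww i).prop.symm)).symm (k i)) := by
        rw [hrep, map_sum]
        exact Finset.sum_congr rfl fun i _ => hΦ α (ww i).val (ww i).prop.symm (k i)
      have h1 : ‖(f : (R (G.d α)).carrier)‖ ^ 2 =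
          RCLike.re (∑ i, ∑ j, ⟪K (ww j).val (ww i).val (k i), k j⟫_𝕜) := by
        rw [hco]; exact norm_sq_sum_Kx A p K R ww k
      have h2 : ‖((Φ α f) : (R (G.c α)).carrier)‖ ^ 2 =
          RCLike.re (∑ i, ∑ j, ⟪K (A.act α (ww j).val) (A.act α (ww i).val)
            ((castE 𝕜 E (hp (ww i).prop.symm)).symm (k i)),
            ((castE 𝕜 E (hp (ww j).prop.symm)).symm (k j))⟫_𝕜) := by
        rw [hΦf, Submodule.coe_sum]
        exact norm_sq_sum_Kx A p K R _ _
      have hsq : ‖((Φ α f) : (R (G.c α)).carrier)‖ ^ 2 ≤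
          (Real.sqrt M * ‖(f : (R (G.d α)).carrier)‖) ^ 2 := by
        rw [mul_pow, Real.sq_sqrt hM, h1, h2]
        exact hbd n (fun i => (ww i).val) (fun i => (ww i).prop.symm) k
      calc ‖((Φ α f) : (R (G.c α)).carrier)‖
          = Real.sqrt (‖((Φ α f) : (R (G.c α)).carrier)‖ ^ 2) :=
            (Real.sqrt_sq (norm_nonneg _)).symm
        _ ≤ Real.sqrt ((Real.sqrt M * ‖(f : (R (G.d α)).carrier)‖) ^ 2) :=
            Real.sqrt_le_sqrt hsq
        _ = Real.sqrt M * ‖(f : (R (G.d α)).carrier)‖ :=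
            Real.sqrt_sq (by positivity)
    · intro hΦbd α
      obtain ⟨C, hC, hb⟩ := hΦbd α
      refine ⟨C ^ 2, sq_nonneg C, fun n z hz g => ?_⟩
      set f : ↥(Dspan A p K R (G.d α)) :=
        ∑ i, KxD A p K R (⟨z i, (hz i).symm⟩ : {x : X // A.a x = G.d α}) (g i) with hf
      have hΦf : Φ α f = ∑ i, KxD A p K R
          (⟨A.act α (z i), A.a_act (hz i)⟩ : {y : X // A.a y = G.c α})
          ((castE 𝕜 E (hp (hz i))).symm (g i)) := by
        rw [hf, map_sum]
        exact Finset.sum_congr rfl fun i _ => hΦ α (z i) (hz i) (g i)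
      have h1 : ‖(f : (R (G.d α)).carrier)‖ ^ 2 =
          RCLike.re (∑ i, ∑ j, ⟪K (z j) (z i) (g i), g j⟫_𝕜) := by
        rw [hf, Submodule.coe_sum]
        exact norm_sq_sum_Kx A p K R _ _
      have h2 : ‖((Φ α f) : (R (G.c α)).carrier)‖ ^ 2 =
          RCLike.re (∑ i, ∑ j, ⟪K (A.act α (z j)) (A.act α (z i))
            ((castE 𝕜 E (hp (hz i))).symm (g i)),
            ((castE 𝕜 E (hp (hz j))).symm (g j))⟫_𝕜) := by
        rw [hΦf, Submodule.coe_sum]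
        exact norm_sq_sum_Kx A p K R _ _
      have key := pow_le_pow_left₀ (norm_nonneg _) (hb f) 2
      rw [mul_pow, h1, h2] at key
      exact key
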